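/- Let X be a uniformly convex real Banach space and Y a real Banach space whose dual Y* is uniformly convex (equivalently, Y is uniformly smooth). Let L be a nonempty closed symmetric subset of S_X × S_{Y*} satisfying: there exists ε₀ > 0 such that for all ε ∈ (0, ε₀) and all (x,y*), (z,t*) ∈ L, if min(‖x−z‖+‖y*−t*‖, ‖x+z‖+‖y*+t*‖) ≥ ε then min(‖x+z‖+‖y*−t*‖, ‖x−z‖+‖y*+t*‖) ≥ ε. Then L has property (P). -/

import Mathlib

open Filter Topology Set

noncomputable section

variable {X Y : Type*}
  [NormedAddCommGroup X] [NormedSpace ℝ X]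
  [NormedAddCommGroup Y] [NormedSpace ℝ Y]

/-- The Hausdorff distance between the symmetric pairs `Γ p = {p, -p}` and `Γ q = {q, -q}`
in `X × Y*` with the sum norm. -/
def dHG (p q : X × (Y →L[ℝ] ℝ)) : ℝ :=
  min (‖p.1 - q.1‖ + ‖p.2 - q.2‖) (‖p.1 + q.1‖ + ‖p.2 + q.2‖)

/-- Property (P) for a subset `L ⊆ S_X × S_{Y*}`. -/
def PropP (L : Set (X × (Y →L[ℝ] ℝ))) : Prop :=
  ∃ ε₀ > (0 : ℝ), ∀ ε : ℝ, 0 < ε → ε < ε₀ → ∃ ϖ > (0 : ℝ), ∀ p ∈ L,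
    ∃ (xs : X →L[ℝ] ℝ) (ye : Y), ‖xs‖ ≤ 1 ∧ ‖ye‖ ≤ 1 ∧
      ∀ q ∈ L, ε ≤ dHG p q → |xs q.1| + |q.2 ye| ≤ xs p.1 + p.2 ye - ϖ

theorem statement7
    [CompleteSpace X] [CompleteSpace Y]
    [UniformConvexSpace X] [UniformConvexSpace (Y →L[ℝ] ℝ)]
    (L : Set (X × (Y →L[ℝ] ℝ))) (hLne : L.Nonempty)
    (hLsphere : ∀ p ∈ L, ‖p.1‖ = 1 ∧ ‖p.2‖ = 1)
    (hLsym : ∀ p ∈ L, -p ∈ L) (hLclosed : IsClosed L)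
    (hsep : ∃ ε₀ > (0 : ℝ), ∀ ε : ℝ, 0 < ε → ε < ε₀ → ∀ p ∈ L, ∀ q ∈ L,
      ε ≤ dHG p q →
        ε ≤ min (‖p.1 + q.1‖ + ‖p.2 - q.2‖) (‖p.1 - q.1‖ + ‖p.2 + q.2‖)) :
    PropP L := by
  obtain ⟨ε₀, hε₀, hsep⟩ := hsep
  refine ⟨ε₀, hε₀, ?_⟩
  intro ε hε hεε₀
  have hε2 : (0:ℝ) < ε / 2 := by linarith
  obtain ⟨δX, hδX, hXuc⟩ := exists_forall_sphere_dist_add_le_two_sub X hε2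
  obtain ⟨δY, hδY, hYuc⟩ := exists_forall_sphere_dist_add_le_two_sub (Y →L[ℝ] ℝ) hε2
  set δ : ℝ := min δX δY with hδdef
  have hδ : 0 < δ := lt_min hδX hδY
  refine ⟨δ / 4, by linarith, ?_⟩
  rintro ⟨x, ys⟩ hpL
  obtain ⟨hx1, hys1⟩ := hLsphere _ hpL
  simp only at hx1 hys1
  have hx0 : x ≠ 0 := by intro h; rw [h, norm_zero] at hx1; norm_num at hx1
  obtain ⟨xs, hxs1, hxsx⟩ := exists_dual_vector ℝ x (norm_ne_zero_iff.mpr hx0)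
  have hxsx1 : xs x = 1 := by simpa [hx1] using hxsx
  obtain ⟨y, hylt, hyval⟩ := ys.exists_lt_apply_of_lt_opNorm
    (r := 1 - δ / 4) (by rw [hys1]; linarith)
  rw [Real.norm_eq_abs] at hyval
  -- choose the sign of y so that ys ye = |ys y|
  set ye : Y := if 0 ≤ ys y then y else -y with hyedef
  have hye_norm : ‖ye‖ ≤ 1 := by
    rw [hyedef]; split_ifs <;> simpa using hylt.le
  have hysye : ys ye = |ys y| := by
    rcases le_or_gt 0 (ys y) with h | h
    · simp [hyedef, h, abs_of_nonneg h]
    · simp [hyedef, h.not_ge, abs_of_neg h]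
  have hysye_gt : 1 - δ / 4 < ys ye := by rw [hysye]; exact hyval
  refine ⟨xs, ye, le_of_eq hxs1, hye_norm, ?_⟩
  rintro ⟨z, ts⟩ hqL hd
  obtain ⟨hz1, hts1⟩ := hLsphere _ hqL
  simp only at hz1 hts1 hd ⊢
  by_contra hcon
  push_neg at hcon
  rw [hxsx1] at hcon
  have habs_xz : |xs z| ≤ 1 := by
    calc |xs z| = ‖xs z‖ := (Real.norm_eq_abs _).symm
    _ ≤ ‖xs‖ * ‖z‖ := xs.le_opNorm z
    _ = 1 := by rw [hxs1, hz1]; ring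
  have habs_ty : |ts ye| ≤ 1 := by
    calc |ts ye| = ‖ts ye‖ := (Real.norm_eq_abs _).symm
    _ ≤ ‖ts‖ * ‖ye‖ := ts.le_opNorm ye
    _ ≤ 1 := by rw [hts1]; simpa using hye_norm
  have hysye_le : ys ye ≤ 1 := by
    calc ys ye ≤ ‖ys ye‖ := Real.le_norm_self _
    _ ≤ ‖ys‖ * ‖ye‖ := ys.le_opNorm ye
    _ ≤ 1 := by rw [hys1]; simpa using hye_norm
  -- both terms are large
  have hbig : 2 - δ / 2 < |xs z| + |ts ye| := by linarith
  have hxz_big : 1 - δ / 2 < |xs z| := by linarith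
  have hty_big : 1 - δ / 2 < |ts ye| := by linarith
  have hδX' : δ ≤ δX := min_le_left _ _
  have hδY' : δ ≤ δY := min_le_right _ _
  -- choose sign s for z : xs (s • z) = |xs z|
  obtain ⟨s, hs, hsz⟩ : ∃ s : ℝ, (s = 1 ∨ s = -1) ∧ xs (s • z) = |xs z| := by
    rcases le_or_gt 0 (xs z) with h | h
    · exact ⟨1, Or.inl rfl, by simp [abs_of_nonneg h]⟩
    · exact ⟨-1, Or.inr rfl, by simp [abs_of_neg h]⟩
  obtain ⟨s', hs', hst⟩ : ∃ s' : ℝ, (s' = 1 ∨ s' = -1) ∧ (s' • ts) ye = |ts ye| := by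
    rcases le_or_gt 0 (ts ye) with h | h
    · exact ⟨1, Or.inl rfl, by simp [abs_of_nonneg h]⟩
    · exact ⟨-1, Or.inr rfl, by simp [abs_of_neg h]⟩
  have hsz_norm : ‖s • z‖ = 1 := by
    rcases hs with h | h <;> simp [h, hz1]
  have hst_norm : ‖s' • ts‖ = 1 := by
    rcases hs' with h | h <;> simp [h, hts1, norm_smul]
  -- uniform convexity in X gives ‖x - s•z‖ < ε/2
  have hX_close : ‖x - s • z‖ < ε / 2 := by
    by_contra h
    push_neg at h
    have := hXuc hx1 hsz_norm h
    have hlb : 2 - δ / 2 < ‖x + s • z‖ := by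
      have : xs (x + s • z) = 1 + |xs z| := by rw [map_add, hxsx1, hsz]
      have h2 : xs (x + s • z) ≤ ‖x + s • z‖ := by
        calc xs (x + s • z) ≤ ‖xs (x + s • z)‖ := Real.le_norm_self _
        _ ≤ ‖xs‖ * ‖x + s • z‖ := xs.le_opNorm _
        _ = ‖x + s • z‖ := by rw [hxs1, one_mul]
      linarith
    linarith
  -- uniform convexity in Y* gives ‖ys - s'•ts‖ < ε/2
  have hY_close : ‖ys - s' • ts‖ < ε / 2 := by
    by_contra h
    push_neg at h
    have := hYuc hys1 hst_norm h
    have hlb : 2 - δY < ‖ys + s' • ts‖ := by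
      have hval : (ys + s' • ts) ye = ys ye + |ts ye| := by
        rw [ContinuousLinearMap.add_apply, hst]
      have h2 : (ys + s' • ts) ye ≤ ‖ys + s' • ts‖ := by
        calc (ys + s' • ts) ye ≤ ‖(ys + s' • ts) ye‖ := Real.le_norm_self _
        _ ≤ ‖ys + s' • ts‖ * ‖ye‖ := (ys + s' • ts).le_opNorm _
        _ ≤ ‖ys + s' • ts‖ := mul_le_of_le_one_right (norm_nonneg _) hye_norm
      linarith
    linarith
  have hsum : ‖x - s • z‖ + ‖ys - s' • ts‖ < ε := by linarith
  -- now the four sign cases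
  have hmix := hsep ε hε hεε₀ (x, ys) hpL (z, ts) hqL hd
  simp only at hmix
  have hd1 : dHG (x, ys) (z, ts) ≤ ‖x - z‖ + ‖ys - ts‖ := min_le_left _ _
  have hd2 : dHG (x, ys) (z, ts) ≤ ‖x + z‖ + ‖ys + ts‖ := min_le_right _ _
  have hm1 : ε ≤ ‖x + z‖ + ‖ys - ts‖ := le_trans hmix (min_le_left _ _)
  have hm2 : ε ≤ ‖x - z‖ + ‖ys + ts‖ := le_trans hmix (min_le_right _ _)
  have hdd := le_trans hd hd1
  have hdd2 := le_trans hd hd2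
  rcases hs with hs | hs <;> rcases hs' with hs' | hs' <;>
      rw [hs] at hsum <;> rw [hs'] at hsum <;>
      simp only [one_smul, neg_smul, sub_neg_eq_add, show ((-1:ℝ) • ts) = -ts from by ext; simp] at hsum <;> linarith

end
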